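/- arXiv:2306.11805 — 2 statements merged into one kernel-verified Lean document; each statement's English description precedes it below -/
import Mathlib

section
/- For m ≥ 1, all zeros of the polynomial L_m(x) = Σ_{k=1}^{m} (1/k!) · C(m-1, m-k) · x^k other than the simple zero at x = 0 are real, distinct and negative. -/
open Polynomial in
/-- The polynomial `L_m(x) = Σ_{k=1}^{m} (1/k!) · C(m-1, m-k) · x^k`. -/
noncomputable def lagP (m : ℕ) : Polynomial ℝ :=
  ∑ k ∈ Finset.Icc 1 m, Polynomial.C ((1 / (Nat.factorial k) : ℝ) * (Nat.choose (m - 1) (m - k))) * Polynomial.X ^ k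

open Polynomial Filter Set Topology

noncomputable def lagQ (m : ℕ) : ℕ → Polynomial ℝ
  | 0 => X ^ m
  | (j+1) => lagQ m j + derivative (lagQ m j)

lemma lagQ_closed (m j : ℕ) :
    lagQ m j = ∑ i ∈ Finset.range (j+1),
      C ((j.choose i : ℝ) * (Nat.descFactorial m i : ℝ)) * X ^ (m - i) := by
  induction j with
  | zero => simp [lagQ]
  | succ j ih =>
    rw [show lagQ m (j+1) = lagQ m j + derivative (lagQ m j) from rfl, ih, derivative_sum]
    have hder : ∀ i ∈ Finset.range (j+1),
        derivative (C ((j.choose i : ℝ) * (Nat.descFactorial m i : ℝ)) * X ^ (m - i))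
        = C ((j.choose i : ℝ) * (Nat.descFactorial m (i+1) : ℝ)) * X ^ (m - (i+1)) := by
      intro i _
      have h1 : m - i - 1 = m - (i+1) := by omega
      rw [derivative_C_mul, derivative_X_pow, h1, Nat.descFactorial_succ, ← mul_assoc, ← C_mul]
      congr 1
      push_cast
      ring
    rw [Finset.sum_congr rfl hder]
    rw [Finset.sum_range_succ' (fun i => C (((j+1).choose i : ℝ) * (Nat.descFactorial m i : ℝ)) * X ^ (m - i)) (j+1)]
    rw [Finset.sum_range_succ' (fun i => C ((j.choose i : ℝ) * (Nat.descFactorial m i : ℝ)) * X ^ (m - i)) j]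
    have hext : ∑ i ∈ Finset.range j,
        C ((j.choose (i+1) : ℝ) * (Nat.descFactorial m (i+1) : ℝ)) * X ^ (m - (i+1))
        = ∑ i ∈ Finset.range (j+1),
        C ((j.choose (i+1) : ℝ) * (Nat.descFactorial m (i+1) : ℝ)) * X ^ (m - (i+1)) := by
      rw [Finset.sum_range_succ]
      simp [Nat.choose_succ_self]
    rw [hext, add_right_comm, ← Finset.sum_add_distrib]
    congr 1
    · apply Finset.sum_congr rfl
      intro i _
      rw [← add_mul, ← C_add, Nat.choose_succ_succ]
      congr 2
      push_cast
      ring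
    · simp

lemma lagP_eq_lagQ (m : ℕ) (hm : 1 ≤ m) :
    lagP m = C ((m.factorial : ℝ)⁻¹) * lagQ m (m-1) := by
  rw [lagQ_closed, Finset.mul_sum, lagP]
  have hm1 : m - 1 + 1 = m := by omega
  rw [hm1]
  apply Finset.sum_nbij' (fun k => m - k) (fun i => m - i)
  · intro k hk
    simp only [Finset.mem_Icc] at hk
    simp only [Finset.mem_range]
    omega
  · intro i hi
    simp only [Finset.mem_range] at hi
    simp only [Finset.mem_Icc]
    omega
  · intro k hk
    simp only [Finset.mem_Icc] at hk
    omega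
  · intro i hi
    simp only [Finset.mem_range] at hi
    omega
  · intro k hk
    simp only [Finset.mem_Icc] at hk
    have h2 : m - (m - k) = k := by omega
    rw [h2, ← mul_assoc, ← C_mul]
    congr 2
    have h3 : (k.factorial : ℝ) ≠ 0 := by positivity
    have h4 : (m.factorial : ℝ) ≠ 0 := by positivity
    have h5 : k.factorial * Nat.descFactorial m (m - k) = m.factorial := by
      have := Nat.factorial_mul_descFactorial (show m - k ≤ m by omega)
      rwa [show m - (m - k) = k by omega] at this
    field_simp
    push_cast [← h5]
    ring

lemma expMul_hasDerivAt (q : Polynomial ℝ) (x : ℝ) :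
    HasDerivAt (fun x => Real.exp x * q.eval x) (Real.exp x * (q + derivative q).eval x) x := by
  have h : HasDerivAt (fun y => Real.exp y * q.eval y) _ x := (Real.hasDerivAt_exp x).mul (q.hasDerivAt x)
  convert h using 1
  simp only [eval_add]
  ring

lemma rolleA (q : Polynomial ℝ) {a b : ℝ} (hab : a < b) (ha : q.eval a = 0) (hb : q.eval b = 0) :
    ∃ c ∈ Set.Ioo a b, (q + derivative q).eval c = 0 := by
  obtain ⟨c, hc, h0⟩ := exists_hasDerivAt_eq_zero (f := fun x => Real.exp x * q.eval x)
    (f' := fun x => Real.exp x * (q + derivative q).eval x) hab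
    (Continuous.continuousOn (Real.continuous_exp.mul q.continuous_aeval)) (by show Real.exp a * q.eval a = Real.exp b * q.eval b; rw [ha, hb]; ring) (fun x _ => expMul_hasDerivAt q x)
  exact ⟨c, hc, (mul_eq_zero.mp h0).resolve_left (Real.exp_ne_zero c)⟩

lemma tendsto_expMul_atBot (q : Polynomial ℝ) :
    Filter.Tendsto (fun x => Real.exp x * q.eval x) atBot (𝓝 0) := by
  have h1 := (q.comp (-X)).tendsto_div_exp_atTop
  have h2 : Filter.Tendsto (fun x : ℝ => -x) atBot atTop := tendsto_neg_atBot_atTop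
  refine (h1.comp h2).congr fun x => ?_
  simp [Function.comp, eval_comp, Real.exp_neg, div_eq_mul_inv, inv_inv]
  ring

lemma rolleB (q : Polynomial ℝ) (hq : q ≠ 0) {b : ℝ} (hb : q.eval b = 0) :
    ∃ c < b, (q + derivative q).eval c = 0 := by
  set f : ℝ → ℝ := fun x => Real.exp x * q.eval x with hf
  obtain ⟨x0, hx0b, hx0⟩ : ∃ x0 < b, q.eval x0 ≠ 0 := by
    obtain ⟨x0, hx0⟩ := ((Set.Iio_infinite b).diff (q.finite_setOf_isRoot hq)).nonempty
    exact ⟨x0, hx0.1, hx0.2⟩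
  have hfx0 : 0 < |f x0| := by
    simp only [hf, abs_mul, abs_pos]
    positivity
  obtain ⟨A, hA⟩ : ∃ A, ∀ x ≤ A, |f x| < |f x0| := by
    have h1 : ∀ᶠ x in atBot, |f x| < |f x0| := by
      have := (tendsto_expMul_atBot q).eventually (eventually_abs_sub_lt 0 hfx0)
      simpa [hf, abs_mul, Real.abs_exp] using this
    exact eventually_atBot.mp h1
  have hAx0 : A < x0 := by
    by_contra h
    push_neg at h
    exact absurd (hA x0 h) (lt_irrefl _)
  have hAb : A < b := hAx0.trans hx0b
  have hfcont : Continuous f := Real.continuous_exp.mul q.continuous_aeval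
  obtain ⟨c, hcmem, hcmax⟩ := isCompact_Icc.exists_isMaxOn (Set.nonempty_Icc.mpr hAb.le)
    ((continuous_abs.comp hfcont).continuousOn)
  have hfc : |f x0| ≤ |f c| := hcmax ⟨hAx0.le, hx0b.le⟩
  have hfb : f b = 0 := by simp [hf, hb]
  have hcb : c ≠ b := by
    intro h
    rw [h, hfb, abs_zero] at hfc
    exact absurd hfc (not_le.mpr hfx0)
  have hcA : c ≠ A := by
    intro h
    exact absurd hfc (not_le.mpr (hA c (le_of_eq h)))
  have hcIoo : c ∈ Set.Ioo A b := ⟨lt_of_le_of_ne hcmem.1 (Ne.symm hcA), lt_of_le_of_ne hcmem.2 hcb⟩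
  have hnhds : Set.Icc A b ∈ 𝓝 c := Icc_mem_nhds hcIoo.1 hcIoo.2
  have hfcne : f c ≠ 0 := by
    intro h
    rw [h, abs_zero] at hfc
    exact absurd hfc (not_le.mpr hfx0)
  have hder := expMul_hasDerivAt q c
  have hzero : Real.exp c * (q + derivative q).eval c = 0 := by
    rcases lt_or_gt_of_ne hfcne with hneg | hpos
    · have hmin : IsMinOn f (Set.Icc A b) c := by
        apply isMinOn_iff.mpr
        intro x hx
        have h1 : |f x| ≤ |f c| := hcmax hx
        have h2 : f c = -|f c| := by rw [abs_of_neg hneg]; ring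
        calc f c = -|f c| := h2
          _ ≤ -|f x| := neg_le_neg h1
          _ ≤ f x := neg_abs_le _
      exact (hmin.isLocalMin hnhds).hasDerivAt_eq_zero hder
    · have hmax : IsMaxOn f (Set.Icc A b) c := by
        apply isMaxOn_iff.mpr
        intro x hx
        calc f x ≤ |f x| := le_abs_self _
          _ ≤ |f c| := hcmax hx
          _ = f c := abs_of_pos hpos
      exact (hmax.isLocalMax hnhds).hasDerivAt_eq_zero hder
  exact ⟨c, hcIoo.2, (mul_eq_zero.mp hzero).resolve_left (Real.exp_ne_zero c)⟩

lemma lagQ_roots (m : ℕ) (hm : 1 ≤ m) : ∀ j, j ≤ m - 1 →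
    ∃ s : Finset ℝ, s.card = j ∧ (∀ x ∈ s, x < 0) ∧
      lagQ m j = X ^ (m - j) * ∏ x ∈ s, (X - C x) := by
  intro j
  induction j with
  | zero => intro _; exact ⟨∅, rfl, by simp, by simp [lagQ]⟩
  | succ j ih =>
    intro hj1
    obtain ⟨s, hcard, hneg, heq⟩ := ih (by omega)
    have hjm : j + 2 ≤ m := by omega
    set n : ℕ := m - j with hn
    have hn2 : 2 ≤ n := by omega
    set P : Polynomial ℝ := ∏ x ∈ s, (X - C x) with hP
    have hPmonic : P.Monic := monic_prod_of_monic _ _ (fun x _ => monic_X_sub_C x)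
    have hPne : P ≠ 0 := hPmonic.ne_zero
    have hPnd : P.natDegree = j := by
      rw [hP, natDegree_prod _ _ (fun x _ => X_sub_C_ne_zero x)]
      simp [hcard]
    have hPdeg : P.degree = (j : WithBot ℕ) := by
      rw [degree_eq_natDegree hPne, hPnd]
    set R : Polynomial ℝ := X * (P + derivative P) + C ((n : ℕ) : ℝ) * P with hR
    -- structure of lagQ m (j+1)
    have hsplit : lagQ m (j+1) = X ^ (m - (j+1)) * R := by
      show lagQ m j + derivative (lagQ m j) = _
      rw [heq, derivative_mul, derivative_X_pow]
      have hx : (X : Polynomial ℝ) ^ (m - j) = X ^ (m - (j+1)) * X := by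
        rw [← pow_succ]; congr 1; omega
      have hx2 : m - j - 1 = m - (j + 1) := by omega
      rw [hx, hx2, hR]
      ring
    -- degree facts for R
    have hPP : (P + derivative P).Monic := hPmonic.add_of_left (degree_derivative_lt hPne)
    have hPPdeg : (P + derivative P).degree = (j : WithBot ℕ) := by
      rw [degree_add_eq_left_of_degree_lt (degree_derivative_lt hPne), hPdeg]
    have hXPPdeg : (X * (P + derivative P)).degree = ((j + 1 : ℕ) : WithBot ℕ) := by
      rw [degree_mul, degree_X, hPPdeg]
      rw [← Nat.cast_one, ← Nat.cast_add, Nat.add_comm]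
    have hRmonic : R.Monic := by
      apply Polynomial.Monic.add_of_left (monic_X.mul hPP)
      rw [hXPPdeg]
      calc (C ((n : ℕ) : ℝ) * P).degree ≤ (C ((n : ℕ) : ℝ)).degree + P.degree := degree_mul_le _ _
        _ ≤ 0 + P.degree := add_le_add_left degree_C_le _
        _ = (j : WithBot ℕ) := by rw [zero_add, hPdeg]
        _ < ((j + 1 : ℕ) : WithBot ℕ) := by exact_mod_cast WithBot.coe_lt_coe.mpr (by omega)
    have hRdeg : R.degree = ((j + 1 : ℕ) : WithBot ℕ) := by
      rw [hR, degree_add_eq_left_of_degree_lt, hXPPdeg]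
      rw [hXPPdeg]
      calc (C ((n : ℕ) : ℝ) * P).degree ≤ (C ((n : ℕ) : ℝ)).degree + P.degree := degree_mul_le _ _
        _ ≤ 0 + P.degree := add_le_add_left degree_C_le _
        _ = (j : WithBot ℕ) := by rw [zero_add, hPdeg]
        _ < ((j + 1 : ℕ) : WithBot ℕ) := by exact_mod_cast WithBot.coe_lt_coe.mpr (by omega)
    have hRnd : R.natDegree = j + 1 := natDegree_eq_of_degree_eq_some hRdeg
    have hRne : R ≠ 0 := hRmonic.ne_zero
    -- now find the roots
    set y : Fin (j+1) → ℝ := fun i => if h : (i : ℕ) < j then ((s.orderIsoOfFin hcard) ⟨i, h⟩ : ℝ) else 0 with hy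
    have hymem : ∀ (i : Fin (j+1)) (h : (i:ℕ) < j), y i ∈ s := by
      intro i h
      simp only [hy, dif_pos h]
      exact ((s.orderIsoOfFin hcard) ⟨i, h⟩).2
    have hyneg : ∀ (i : Fin (j+1)), (i:ℕ) < j → y i < 0 := fun i h => hneg _ (hymem i h)
    have hyzero : ∀ (i : Fin (j+1)), ¬ (i:ℕ) < j → y i = 0 := by
      intro i h
      simp only [hy, dif_neg h]
    have hyle : ∀ i, y i ≤ 0 := by
      intro i
      by_cases h : (i:ℕ) < j
      · exact (hyneg i h).le
      · exact (hyzero i h).le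
    have hymono : StrictMono y := by
      intro a b hab
      have hab' : (a:ℕ) < (b:ℕ) := hab
      by_cases h : (b:ℕ) < j
      · have ha : (a:ℕ) < j := lt_trans hab' h
        simp only [hy, dif_pos h, dif_pos ha]
        exact_mod_cast (s.orderIsoOfFin hcard).strictMono (by exact_mod_cast hab')
      · have ha : (a:ℕ) < j := by omega
        rw [hyzero b h]
        exact hyneg a ha
    have hyroot : ∀ i, (lagQ m j).eval (y i) = 0 := by
      intro i
      rw [heq, eval_mul, eval_pow, eval_X]
      by_cases h : (i:ℕ) < j
      · have : P.eval (y i) = 0 := by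
          rw [hP, eval_prod]
          exact Finset.prod_eq_zero (hymem i h) (by simp)
        rw [this, mul_zero]
      · rw [hyzero i h, zero_pow (by omega), zero_mul]
    have hQjne : lagQ m j ≠ 0 := by
      rw [heq]
      exact mul_ne_zero (pow_ne_zero _ X_ne_zero) hPne
    obtain ⟨c0, hc0lt, hc0root⟩ := rolleB (lagQ m j) hQjne (hyroot 0)
    have H : ∀ i : Fin j, ∃ cc, cc ∈ Set.Ioo (y i.castSucc) (y i.succ) ∧
        (lagQ m j + derivative (lagQ m j)).eval cc = 0 := by
      intro i
      obtain ⟨cc, h1, h2⟩ := rolleA (lagQ m j) (hymono (Fin.castSucc_lt_succ (i := i)))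
        (hyroot i.castSucc) (hyroot i.succ)
      exact ⟨cc, h1, h2⟩
    choose c' hc'mem hc'root using H
    have hc'mono : StrictMono c' := by
      intro a b hab
      calc c' a < y a.succ := (hc'mem a).2
        _ ≤ y b.castSucc := hymono.monotone (by
            rw [Fin.le_def]
            simp only [Fin.val_succ, Fin.coe_castSucc]
            exact hab)
        _ < c' b := (hc'mem b).1
    have hc0lt' : ∀ i : Fin j, c0 < c' i := by
      intro i
      calc c0 < y 0 := hc0lt
        _ ≤ y i.castSucc := hymono.monotone (Fin.zero_le _)
        _ < c' i := (hc'mem i).1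
    set c : Fin (j+1) → ℝ := Fin.cons c0 c' with hc
    have hcmono : StrictMono c := by
      intro a b hab
      rcases Fin.eq_zero_or_eq_succ b with rfl | ⟨i, rfl⟩
      · exact absurd hab (Fin.not_lt_zero a)
      · rcases Fin.eq_zero_or_eq_succ a with rfl | ⟨i', rfl⟩
        · simpa [hc, Fin.cons_succ] using hc0lt' i
        · have h2 : i' < i := by
            rwa [Fin.succ_lt_succ_iff] at hab
          simpa [hc, Fin.cons_succ] using hc'mono h2
    have hcneg : ∀ i, c i < 0 := by
      intro i
      rcases Fin.eq_zero_or_eq_succ i with rfl | ⟨i', rfl⟩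
      · simp only [hc, Fin.cons_zero]
        exact lt_of_lt_of_le hc0lt (hyle 0)
      · simp only [hc, Fin.cons_succ]
        exact lt_of_lt_of_le (hc'mem i').2 (hyle i'.succ)
    have hcQroot : ∀ i, (lagQ m (j+1)).eval (c i) = 0 := by
      intro i
      show (lagQ m j + derivative (lagQ m j)).eval (c i) = 0
      rcases Fin.eq_zero_or_eq_succ i with rfl | ⟨i', rfl⟩
      · simpa [hc, Fin.cons_zero] using hc0root
      · simpa [hc, Fin.cons_succ] using hc'root i'
    have hcRroot : ∀ i, R.eval (c i) = 0 := by
      intro i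
      have h1 := hcQroot i
      rw [hsplit, eval_mul, eval_pow, eval_X] at h1
      rcases mul_eq_zero.mp h1 with h2 | h2
      · exact absurd (pow_eq_zero_iff (by omega) |>.mp h2) (ne_of_lt (hcneg i))
      · exact h2
    set t : Finset ℝ := Finset.image c Finset.univ with ht
    have htcard : t.card = j + 1 := by
      rw [ht, Finset.card_image_of_injective _ hcmono.injective, Finset.card_univ,
        Fintype.card_fin]
    have htneg : ∀ x ∈ t, x < 0 := by
      intro x hx
      rw [ht, Finset.mem_image] at hx
      obtain ⟨i, _, rfl⟩ := hx
      exact hcneg i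
    have htroot : ∀ x ∈ t, R.IsRoot x := by
      intro x hx
      rw [ht, Finset.mem_image] at hx
      obtain ⟨i, _, rfl⟩ := hx
      exact hcRroot i
    have htle : t.val ≤ R.roots := by
      rw [Multiset.le_iff_count]
      intro a
      by_cases ha : a ∈ t
      · rw [Polynomial.count_roots, Multiset.count_eq_one_of_mem t.nodup ha]
        exact (Polynomial.rootMultiplicity_pos hRne).mpr (htroot a ha)
      · rw [Multiset.count_eq_zero_of_notMem (by simpa using ha)]
        exact Nat.zero_le _
    have hrootseq : R.roots = t.val := by
      refine (Multiset.eq_of_le_of_card_le htle ?_).symm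
      calc Multiset.card R.roots ≤ R.natDegree := R.card_roots'
        _ = j + 1 := hRnd
        _ = Multiset.card t.val := by rw [← htcard]; rfl
    have hRfact : R = ∏ x ∈ t, (X - C x) := by
      have h1 := prod_multiset_X_sub_C_of_monic_of_roots_card_eq hRmonic
        (by rw [hrootseq, hRnd]; exact htcard)
      rw [hrootseq] at h1
      rw [Finset.prod_eq_multiset_prod]
      exact h1.symm
    exact ⟨t, htcard, htneg, by rw [hsplit, hRfact]⟩

/-- For m ≥ 1, all zeros of `L_m` other than the simple zero at `x = 0` are real, distinct
and negative: the complex roots of `L_m` (with multiplicity) are `0` together with `m - 1`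
distinct negative reals. -/
theorem stmt_9 (m : ℕ) (hm : 1 ≤ m) :
    ∃ s : Finset ℝ, s.card = m - 1 ∧ (∀ x ∈ s, x < 0) ∧
      ((lagP m).map (algebraMap ℝ ℂ)).roots
        = 0 ::ₘ (s.val.map (fun x : ℝ => (x : ℂ))) := by
  obtain ⟨s, hcard, hneg, heq⟩ := lagQ_roots m hm (m-1) le_rfl
  refine ⟨s, hcard, hneg, ?_⟩
  have h1 : lagP m = C ((m.factorial : ℝ)⁻¹) * (X * ∏ x ∈ s, (X - C x)) := by
    rw [lagP_eq_lagQ m hm, heq]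
    have h2 : m - (m-1) = 1 := by omega
    rw [h2, pow_one]
  rw [h1, Polynomial.map_mul, Polynomial.map_mul, Polynomial.map_C, Polynomial.map_X,
    Polynomial.map_prod]
  simp only [Polynomial.map_sub, Polynomial.map_X, Polynomial.map_C]
  have hprod : ∏ x ∈ s, (X - C ((algebraMap ℝ ℂ) x))
      = ((s.val.map (fun x : ℝ => (x : ℂ))).map (fun a => X - C a)).prod := by
    rw [Finset.prod_eq_multiset_prod, Multiset.map_map]
    rfl
  have hprodne : ((s.val.map (fun x : ℝ => (x : ℂ))).map (fun a => X - C a)).prod ≠ 0 := by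
    apply Multiset.prod_ne_zero
    intro h0
    rw [Multiset.mem_map] at h0
    obtain ⟨a, _, ha⟩ := h0
    exact X_sub_C_ne_zero a ha
  have hCne : (C ((algebraMap ℝ ℂ) (m.factorial : ℝ)⁻¹)) ≠ 0 := by
    simp [Nat.factorial_ne_zero]
  rw [hprod, roots_C_mul _ (by simpa using hCne), roots_mul (mul_ne_zero X_ne_zero hprodne),
    roots_X, roots_multiset_prod_X_sub_C, Multiset.singleton_add]
end

section
/- The polynomials L_m^{(τ)}(ξ) = (-ξ)^{m-τ} Σ_{n=0}^{τ-1} C(m+n, n) · C(m-1, τ-n-1) · (-ξ²)^n satisfy the three-term recurrence L_{m+1}^{(τ)}(ξ) = a_m^{(τ)}(ξ) L_m^{(τ)}(ξ) + b_m L_{m-1}^{(τ)}(ξ) for m ≥ 1, where a_m^{(τ)}(ξ) = -((m+τ)/(m+1)) ξ - ((m-τ)/(m+1)) ξ^{-1} and b_m = -(m-1)/(m+1). -/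
/-- `L_m^{(τ)}(ξ) = (-ξ)^{m-τ} Σ_{n=0}^{τ-1} C(m+n, n) · C(m-1, τ-n-1) · (-ξ²)^n`,
with the exponent `m - τ` taken in `ℤ`. -/
noncomputable def lagD (τ m : ℕ) (ξ : ℝ) : ℝ :=
  (-ξ) ^ ((m : ℤ) - (τ : ℤ)) *
    ∑ n ∈ Finset.range τ,
      ((Nat.choose (m + n) n : ℝ)) * (Nat.choose (m - 1) (τ - n - 1)) * (-ξ ^ 2) ^ n


lemma keyJ (j k n : ℕ) :
    ((j:ℝ)+k+3) * (Nat.choose (j+k+n+3) n) * (Nat.choose (j+k+2) (k+1))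
      - ((j:ℝ)+2*k+n+4) * (Nat.choose (j+k+n+2) n) * (Nat.choose (j+k+1) (k+1))
    = ((n:ℝ)-j) * (Nat.choose (j+k+n+3) (n+1)) * (Nat.choose (j+k+1) k)
      + ((j:ℝ)+k+1) * (Nat.choose (j+k+n+2) (n+1)) * (Nat.choose (j+k) k) := by
  rw [Nat.cast_choose ℝ (show n ≤ j+k+n+3 by omega),
      Nat.cast_choose ℝ (show k+1 ≤ j+k+2 by omega),
      Nat.cast_choose ℝ (show n ≤ j+k+n+2 by omega),
      Nat.cast_choose ℝ (show k+1 ≤ j+k+1 by omega),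
      Nat.cast_choose ℝ (show n+1 ≤ j+k+n+3 by omega),
      Nat.cast_choose ℝ (show k ≤ j+k+1 by omega),
      Nat.cast_choose ℝ (show n+1 ≤ j+k+n+2 by omega),
      Nat.cast_choose ℝ (show k ≤ j+k by omega)]
  rw [show j+k+n+3-n = j+k+3 from by omega, show j+k+2-(k+1) = j+1 from by omega,
      show j+k+n+2-n = j+k+2 from by omega, show j+k+1-(k+1) = j from by omega,
      show j+k+n+3-(n+1) = j+k+2 from by omega, show j+k+1-k = j+1 from by omega,
      show j+k+n+2-(n+1) = j+k+1 from by omega, show j+k-k = j from by omega]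
  rw [show j+k+n+3 = (j+k+n+2)+1 from by omega, Nat.factorial_succ (j+k+n+2),
      show j+k+3 = (j+k+2)+1 from by omega, Nat.factorial_succ (j+k+2),
      show j+k+2 = (j+k+1)+1 from by omega, Nat.factorial_succ (j+k+1),
      show j+k+1 = (j+k)+1 from by omega, Nat.factorial_succ (j+k),
      Nat.factorial_succ k, Nat.factorial_succ j, Nat.factorial_succ n]
  have h1 : ((j+k+n+2).factorial : ℝ) ≠ 0 := Nat.cast_ne_zero.mpr (Nat.factorial_ne_zero _)
  have h2 : ((j+k).factorial : ℝ) ≠ 0 := Nat.cast_ne_zero.mpr (Nat.factorial_ne_zero _)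
  have h3 : ((n).factorial : ℝ) ≠ 0 := Nat.cast_ne_zero.mpr (Nat.factorial_ne_zero _)
  have h4 : ((k).factorial : ℝ) ≠ 0 := Nat.cast_ne_zero.mpr (Nat.factorial_ne_zero _)
  have h5 : ((j).factorial : ℝ) ≠ 0 := Nat.cast_ne_zero.mpr (Nat.factorial_ne_zero _)
  push_cast
  field_simp
  ring

lemma keyA (p n k : ℕ) :
    ((p:ℝ)+2) * (Nat.choose (p+2+n) n) * (Nat.choose (p+1) (k+1))
      - ((p:ℝ)+(n:ℝ)+(k:ℝ)+3) * (Nat.choose (p+1+n) n) * (Nat.choose p (k+1))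
    = -(((p:ℝ)) - ((n:ℝ)+(k:ℝ)+1)) * (Nat.choose (p+1+n+1) (n+1)) * (Nat.choose p k)
      + (p:ℝ) * (Nat.choose (p+n+1) (n+1)) * (Nat.choose (p-1) k) := by
  rcases lt_trichotomy p k with hp | rfl | hp
  · rw [Nat.choose_eq_zero_of_lt (by omega : p+1 < k+1),
        Nat.choose_eq_zero_of_lt (by omega : p < k+1),
        Nat.choose_eq_zero_of_lt (by omega : p < k),
        Nat.choose_eq_zero_of_lt (by omega : p-1 < k)]
    norm_num
  · -- p = k
    have hlast : (p:ℝ) * (Nat.choose (p+n+1) (n+1)) * (Nat.choose (p-1) p) = 0 := by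
      rcases Nat.eq_zero_or_pos p with rfl | hp
      · norm_num
      · rw [Nat.choose_eq_zero_of_lt (by omega : p-1 < p)]; ring
    simp only [Nat.choose_self, Nat.cast_one, mul_one] at hlast ⊢
    rw [Nat.choose_eq_zero_of_lt (by omega : p < p+1), hlast]
    have h := Nat.choose_succ_right_eq (p+2+n) n
    rw [show p+2+n-n = p+2 from by omega] at h
    have h' : ((Nat.choose (p+2+n) (n+1) : ℝ)) * ((n:ℝ)+1) = (Nat.choose (p+2+n) n : ℝ) * ((p:ℝ)+2) := by
      exact_mod_cast congrArg (Nat.cast : ℕ → ℝ) h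
    rw [show p+1+n+1 = p+2+n from by omega]
    push_cast
    linear_combination -h'
  · -- p ≥ k+1
    obtain ⟨j, rfl⟩ : ∃ j, p = j+k+1 := ⟨p-k-1, by omega⟩
    rw [show j+k+1+2+n = j+k+n+3 from by omega, show j+k+1+1 = j+k+2 from by omega,
        show j+k+1+1+n = j+k+n+2 from by omega, show j+k+n+2+1 = j+k+n+3 from by omega,
        show j+k+1+n+1 = j+k+n+2 from by omega, show j+k+1-1 = j+k from by omega]
    push_cast
    linear_combination keyJ j k n

lemma keyTop (p t : ℕ) :
    ((p:ℝ)+2) * (Nat.choose (p+2+t) t) = ((p:ℝ)+(t:ℝ)+2) * (Nat.choose (p+1+t) t) := by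
  have h := Nat.choose_mul_succ_eq (p+1+t) t
  rw [show p+1+t+1 = p+2+t from by omega, show p+2+t-t = p+2 from by omega] at h
  have h' := congrArg (Nat.cast : ℕ → ℝ) h
  push_cast at h'
  linear_combination -h'

lemma keyBot (p t : ℕ) :
    ((p:ℝ) - (t:ℝ)) * (Nat.choose p t) = (p:ℝ) * (Nat.choose (p-1) t) := by
  rcases Nat.eq_zero_or_pos p with rfl | hp
  · rcases Nat.eq_zero_or_pos t with rfl | ht
    · norm_num
    · rw [Nat.choose_eq_zero_of_lt (by omega : 0 < t)]; norm_num
  · obtain ⟨q, rfl⟩ : ∃ q, p = q+1 := ⟨p-1, by omega⟩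
    rcases le_or_gt t (q+1) with ht | ht
    · have h := Nat.choose_mul_succ_eq q t
      have h' := congrArg (Nat.cast : ℕ → ℝ) h
      push_cast [ht] at h'
      rw [show q+1-1 = q from by omega]
      push_cast
      linear_combination -h'
    · rw [Nat.choose_eq_zero_of_lt (by omega : q+1 < t),
          Nat.choose_eq_zero_of_lt (by omega : q+1-1 < t)]
      ring

lemma sumRec (t p : ℕ) (x : ℝ) :
    ((p:ℝ)+2) * x * ∑ n ∈ Finset.range (t+1),
        (Nat.choose (p+2+n) n : ℝ) * (Nat.choose (p+1) (t-n)) * x^n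
    = (((p:ℝ)+(t:ℝ)+2)*x - ((p:ℝ)-(t:ℝ))) * ∑ n ∈ Finset.range (t+1),
        (Nat.choose (p+1+n) n : ℝ) * (Nat.choose p (t-n)) * x^n
      + (p:ℝ) * ∑ n ∈ Finset.range (t+1),
        (Nat.choose (p+n) n : ℝ) * (Nat.choose (p-1) (t-n)) * x^n := by
  have hsum : ∑ n ∈ Finset.range (t+1),
      ((((p:ℝ)+2) * (Nat.choose (p+2+n) n) * (Nat.choose (p+1) (t-n))
        - ((p:ℝ)+(t:ℝ)+2) * (Nat.choose (p+1+n) n) * (Nat.choose p (t-n))) * x^(n+1))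
    = ∑ n ∈ Finset.range (t+1),
      ((-(((p:ℝ)-(t:ℝ))) * (Nat.choose (p+1+n) n) * (Nat.choose p (t-n))
        + (p:ℝ) * (Nat.choose (p+n) n) * (Nat.choose (p-1) (t-n))) * x^n) := by
    rw [Finset.sum_range_succ, Finset.sum_range_succ']
    have hD : (((p:ℝ)+2) * (Nat.choose (p+2+t) t) * (Nat.choose (p+1) (t-t))
        - ((p:ℝ)+(t:ℝ)+2) * (Nat.choose (p+1+t) t) * (Nat.choose p (t-t))) = 0 := by
      rw [Nat.sub_self, Nat.choose_zero_right, Nat.choose_zero_right]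
      push_cast
      linear_combination keyTop p t
    have hE : (-(((p:ℝ)-(t:ℝ))) * (Nat.choose (p+1+0) 0) * (Nat.choose p (t-0))
        + (p:ℝ) * (Nat.choose (p+0) 0) * (Nat.choose (p-1) (t-0))) = 0 := by
      rw [Nat.choose_zero_right, Nat.choose_zero_right, Nat.sub_zero]
      push_cast
      linear_combination -keyBot p t
    rw [hD, hE, zero_mul, add_zero, zero_mul, add_zero]
    refine Finset.sum_congr rfl ?_
    intro n hn
    have hn' : n < t := Finset.mem_range.mp hn
    obtain ⟨k, rfl⟩ : ∃ k, t = n+k+1 := ⟨t-n-1, by omega⟩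
    rw [show n+k+1-n = k+1 from by omega, show n+k+1-(n+1) = k from by omega,
        show p+1+(n+1) = p+1+n+1 from by omega, show p+(n+1) = p+n+1 from by omega]
    push_cast
    linear_combination x^(n+1) * keyA p n k
  have h1 : ((p:ℝ)+2) * x * (∑ n ∈ Finset.range (t+1),
        (Nat.choose (p+2+n) n : ℝ) * (Nat.choose (p+1) (t-n)) * x^n)
      - (((p:ℝ)+(t:ℝ)+2)*x) * (∑ n ∈ Finset.range (t+1),
        (Nat.choose (p+1+n) n : ℝ) * (Nat.choose p (t-n)) * x^n)
    = ∑ n ∈ Finset.range (t+1),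
      ((((p:ℝ)+2) * (Nat.choose (p+2+n) n) * (Nat.choose (p+1) (t-n))
        - ((p:ℝ)+(t:ℝ)+2) * (Nat.choose (p+1+n) n) * (Nat.choose p (t-n))) * x^(n+1)) := by
    rw [Finset.mul_sum, Finset.mul_sum, ← Finset.sum_sub_distrib]
    refine Finset.sum_congr rfl ?_
    intro n _
    ring
  have h2 : -(((p:ℝ)-(t:ℝ))) * (∑ n ∈ Finset.range (t+1),
        (Nat.choose (p+1+n) n : ℝ) * (Nat.choose p (t-n)) * x^n)
      + (p:ℝ) * (∑ n ∈ Finset.range (t+1),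
        (Nat.choose (p+n) n : ℝ) * (Nat.choose (p-1) (t-n)) * x^n)
    = ∑ n ∈ Finset.range (t+1),
      ((-(((p:ℝ)-(t:ℝ))) * (Nat.choose (p+1+n) n) * (Nat.choose p (t-n))
        + (p:ℝ) * (Nat.choose (p+n) n) * (Nat.choose (p-1) (t-n))) * x^n) := by
    rw [Finset.mul_sum, Finset.mul_sum, ← Finset.sum_add_distrib]
    refine Finset.sum_congr rfl ?_
    intro n _
    ring
  linear_combination h1 + hsum - h2

lemma final (P T S2 S1 S0 g ξ : ℝ) (hξ : ξ ≠ 0) (hP : P + 1 + 1 ≠ 0)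
    (hS : (P+2) * -ξ^2 * S2 = ((P+T+2) * -ξ^2 - (P-T)) * S1 + P * S0) :
    g * -ξ * -ξ * S2
      = (-((P+1+(T+1))/(P+1+1)) * ξ + -((P+1-(T+1))/(P+1+1)) * ξ⁻¹) * (g * -ξ * S1)
        + -((P+1-1)/(P+1+1)) * (g * S0) := by
  field_simp
  linear_combination (-g) * hS

theorem stmt_11 (τ : ℕ) (hτ : 1 ≤ τ) (m : ℕ) (hm : 1 ≤ m) (ξ : ℝ) (hξ : ξ ≠ 0) :
    lagD τ (m + 1) ξ
      = (-(((m : ℝ) + τ) / ((m : ℝ) + 1)) * ξ + -(((m : ℝ) - τ) / ((m : ℝ) + 1)) * ξ⁻¹)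
          * lagD τ m ξ
        + (-(((m : ℝ) - 1) / ((m : ℝ) + 1))) * lagD τ (m - 1) ξ := by
  obtain ⟨p, rfl⟩ : ∃ p, m = p+1 := ⟨m-1, by omega⟩
  obtain ⟨t, rfl⟩ : ∃ t, τ = t+1 := ⟨τ-1, by omega⟩
  have hx : (-ξ) ≠ 0 := neg_ne_zero.mpr hξ
  simp only [lagD, Nat.add_sub_cancel]
  have hidx : ∀ n : ℕ, t+1-n-1 = t-n := fun n => by omega
  simp only [hidx, show p+1+1 = p+2 from by omega]
  rw [show ((p+2:ℕ):ℤ) - ((t+1:ℕ):ℤ) = (((p:ℤ)-(t:ℤ)-1)+1)+1 from by push_cast; ring,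
      show ((p+1:ℕ):ℤ) - ((t+1:ℕ):ℤ) = ((p:ℤ)-(t:ℤ)-1)+1 from by push_cast; ring,
      show ((p:ℕ):ℤ) - ((t+1:ℕ):ℤ) = ((p:ℤ)-(t:ℤ)-1) from by push_cast; ring]
  simp only [zpow_add₀ hx, zpow_one]
  have hS := sumRec t p (-ξ^2)
  push_cast
  set g := (-ξ)^((p:ℤ)-(t:ℤ)-1) with hg
  exact final (p:ℝ) (t:ℝ) _ _ _ g ξ hξ (by positivity) hS
end
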